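/- Let K be an inner product space over ℂ and let E := K × K carry the ℓ²-product inner product. Define Z : E → E by Z(x,y) := (x,−y), let V : E ≃ₗᵢ[ℂ] E be a linear isometry equivalence, and set W := V.symm ∘ Z ∘ V. Let ψ₀, ψ₁ ∈ E, let c₀, c₁ ∈ ℂ with ‖c₀‖ ≤ 1 and ‖c₁‖ ≤ 1, let p, Δ : ℝ with 0 ≤ p ≤ 1, 0 ≤ p − Δ and p − Δ ≤ 1, and let ν₀, ν₁, ξ₀, ξ₁ ∈ K be unit vectors. Assume V(c₀•ψ₀ + c₁•ψ₁) = (Real.sqrt (1−p) • ν₀, Real.sqrt p • ν₁) and V(c₀•ψ₀ − c₁•ψ₁) = (Real.sqrt (1−p+Δ) • ξ₀, Real.sqrt (p−Δ) • ξ₁). Then ‖c₁ · ⟪ψ₀, W ψ₁⟫‖ + ‖c₀ · ⟪ψ₁, W ψ₀⟫‖ ≥ |Δ|. (This is the exact duality between distinguishing and swapping: if a measurement following V distinguishes the two superposition states c₀ψ₀ ± c₁ψ₁ with advantage Δ, then the conjugated operator W = V†ZV 'swaps' ψ₀ and ψ₁ with total overlap at least |Δ|.) -/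

import Mathlib

open scoped InnerProductSpace

private lemma stmt5_aux (r : ℝ) : (RCLike.ofReal r : ℂ) = ((r : ℝ) : ℂ) := rfl

/-- Duality between distinguishing and swapping: if a measurement following the unitary `V`
distinguishes `c₀ψ₀ ± c₁ψ₁` with advantage `Δ`, then `W = V† Z V` swaps `ψ₀` and `ψ₁`
with total overlap at least `|Δ|`. -/
theorem stmt5 {K : Type*} [NormedAddCommGroup K] [InnerProductSpace ℂ K]
    (Z : WithLp 2 (K × K) → WithLp 2 (K × K))
    (hZ : ∀ v, Z v = (WithLp.equiv 2 (K × K)).symm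
      (((WithLp.equiv 2 (K × K)) v).1, -((WithLp.equiv 2 (K × K)) v).2))
    (V : WithLp 2 (K × K) ≃ₗᵢ[ℂ] WithLp 2 (K × K))
    (W : WithLp 2 (K × K) → WithLp 2 (K × K)) (hW : W = V.symm ∘ Z ∘ V)
    (ψ₀ ψ₁ : WithLp 2 (K × K)) (c₀ c₁ : ℂ) (hc₀ : ‖c₀‖ ≤ 1) (hc₁ : ‖c₁‖ ≤ 1)
    (p Δ : ℝ) (hp0 : 0 ≤ p) (hp1 : p ≤ 1) (hpΔ0 : 0 ≤ p - Δ) (hpΔ1 : p - Δ ≤ 1)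
    (ν₀ ν₁ ξ₀ ξ₁ : K) (hν₀ : ‖ν₀‖ = 1) (hν₁ : ‖ν₁‖ = 1) (hξ₀ : ‖ξ₀‖ = 1) (hξ₁ : ‖ξ₁‖ = 1)
    (hVp : V (c₀ • ψ₀ + c₁ • ψ₁) = (WithLp.equiv 2 (K × K)).symm
      (Real.sqrt (1 - p) • ν₀, Real.sqrt p • ν₁))
    (hVm : V (c₀ • ψ₀ - c₁ • ψ₁) = (WithLp.equiv 2 (K × K)).symm
      (Real.sqrt (1 - p + Δ) • ξ₀, Real.sqrt (p - Δ) • ξ₁)) :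
    ‖c₁ * ⟪ψ₀, W ψ₁⟫_ℂ‖ + ‖c₀ * ⟪ψ₁, W ψ₀⟫_ℂ‖ ≥ |Δ| := by
  have key : ∀ x y : WithLp 2 (K × K), ⟪x, W y⟫_ℂ = ⟪V x, Z (V y)⟫_ℂ := by
    intro x y
    rw [hW]
    simp only [Function.comp_apply]
    rw [← V.inner_map_map x (V.symm (Z (V y))), V.apply_symm_apply]
  -- linearity of W on the relevant combinations
  have hZlin : ∀ (a b : ℂ) (u v : WithLp 2 (K × K)),
      Z (a • u + b • v) = a • Z u + b • Z v := by
    intro a b u v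
    simp only [hZ, WithLp.equiv_apply, WithLp.equiv_symm_apply, WithLp.ofLp_add,
      WithLp.ofLp_smul, ← WithLp.toLp_add, ← WithLp.toLp_smul]
    congr 1
    simp [Prod.ext_iff, smul_neg]
    abel
  have hWlin : ∀ (a b : ℂ) (u v : WithLp 2 (K × K)),
      W (a • u + b • v) = a • W u + b • W v := by
    intro a b u v
    rw [hW]
    simp only [Function.comp_apply, map_add, map_smul, hZlin]
  have hWp : W (c₀ • ψ₀ + c₁ • ψ₁) = c₀ • W ψ₀ + c₁ • W ψ₁ := hWlin c₀ c₁ ψ₀ ψ₁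
  have hWm : W (c₀ • ψ₀ - c₁ • ψ₁) = c₀ • W ψ₀ - c₁ • W ψ₁ := by
    have := hWlin c₀ (-c₁) ψ₀ ψ₁
    simpa [sub_eq_add_neg, neg_smul] using this
  -- value computations
  have e1 : ⟪c₀ • ψ₀ + c₁ • ψ₁, W (c₀ • ψ₀ + c₁ • ψ₁)⟫_ℂ = ((1 - 2*p : ℝ) : ℂ) := by
    rw [key, hVp, hZ]
    simp only [Equiv.apply_symm_apply, WithLp.prod_inner_apply, WithLp.equiv_symm_apply,
      WithLp.toLp_fst, WithLp.toLp_snd, WithLp.equiv_apply, WithLp.ofLp_toLp]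
    rw [RCLike.real_smul_eq_coe_smul (K := ℂ) (Real.sqrt (1-p)),
      RCLike.real_smul_eq_coe_smul (K := ℂ) (Real.sqrt p)]
    simp only [inner_smul_left, inner_smul_right, inner_neg_right,
      inner_self_eq_norm_sq_to_K, hν₀, hν₁]
    simp only [norm_smul, Complex.norm_real, hν₀, hν₁, mul_one, Real.norm_eq_abs,
      abs_of_nonneg (Real.sqrt_nonneg _)]
    norm_cast
    rw [sq_abs, sq_abs, Real.sq_sqrt (by linarith : (0:ℝ) ≤ 1 - p), Real.sq_sqrt hp0]
    simp only [stmt5_aux]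
    push_cast
    ring
  have e2 : ⟪c₀ • ψ₀ - c₁ • ψ₁, W (c₀ • ψ₀ - c₁ • ψ₁)⟫_ℂ = ((1 - 2*p + 2*Δ : ℝ) : ℂ) := by
    rw [key, hVm, hZ]
    simp only [Equiv.apply_symm_apply, WithLp.prod_inner_apply, WithLp.equiv_symm_apply,
      WithLp.toLp_fst, WithLp.toLp_snd, WithLp.equiv_apply, WithLp.ofLp_toLp]
    rw [RCLike.real_smul_eq_coe_smul (K := ℂ) (Real.sqrt (1-p+Δ)),
      RCLike.real_smul_eq_coe_smul (K := ℂ) (Real.sqrt (p-Δ))]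
    simp only [inner_smul_left, inner_smul_right, inner_neg_right,
      inner_self_eq_norm_sq_to_K, hξ₀, hξ₁]
    simp only [norm_smul, Complex.norm_real, hξ₀, hξ₁, mul_one, Real.norm_eq_abs,
      abs_of_nonneg (Real.sqrt_nonneg _)]
    norm_cast
    rw [sq_abs, sq_abs, Real.sq_sqrt (by linarith : (0:ℝ) ≤ 1 - p + Δ), Real.sq_sqrt hpΔ0]
    simp only [stmt5_aux]
    push_cast
    ring
  -- expand bilinearly
  rw [hWp] at e1
  rw [hWm] at e2
  simp only [inner_add_left, inner_add_right, inner_sub_left, inner_sub_right,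
    inner_smul_left, inner_smul_right] at e1 e2
  have key2 : (starRingEnd ℂ c₀) * (c₁ * ⟪ψ₀, W ψ₁⟫_ℂ)
      + (starRingEnd ℂ c₁) * (c₀ * ⟪ψ₁, W ψ₀⟫_ℂ) = ((-Δ : ℝ) : ℂ) := by
    have h := sub_eq_sub_iff_sub_eq_sub.mp (congrArg₂ Sub.sub e1 e2)
    push_cast at h ⊢
    linear_combination h / 2
  have habs : |Δ| = ‖((-Δ : ℝ) : ℂ)‖ := by
    rw [Complex.norm_real]
    simp [abs_neg]
  rw [ge_iff_le, habs, ← key2]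
  calc ‖(starRingEnd ℂ c₀) * (c₁ * ⟪ψ₀, W ψ₁⟫_ℂ)
      + (starRingEnd ℂ c₁) * (c₀ * ⟪ψ₁, W ψ₀⟫_ℂ)‖
      ≤ ‖(starRingEnd ℂ c₀) * (c₁ * ⟪ψ₀, W ψ₁⟫_ℂ)‖
        + ‖(starRingEnd ℂ c₁) * (c₀ * ⟪ψ₁, W ψ₀⟫_ℂ)‖ := norm_add_le _ _
    _ ≤ ‖c₁ * ⟪ψ₀, W ψ₁⟫_ℂ‖ + ‖c₀ * ⟪ψ₁, W ψ₀⟫_ℂ‖ := by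
        have h1 : ‖(starRingEnd ℂ c₀) * (c₁ * ⟪ψ₀, W ψ₁⟫_ℂ)‖ ≤ ‖c₁ * ⟪ψ₀, W ψ₁⟫_ℂ‖ := by
          rw [norm_mul, RCLike.norm_conj]
          nlinarith [norm_nonneg (c₁ * ⟪ψ₀, W ψ₁⟫_ℂ)]
        have h2 : ‖(starRingEnd ℂ c₁) * (c₀ * ⟪ψ₁, W ψ₀⟫_ℂ)‖ ≤ ‖c₀ * ⟪ψ₁, W ψ₀⟫_ℂ‖ := by
          rw [norm_mul, RCLike.norm_conj]
          nlinarith [norm_nonneg (c₀ * ⟪ψ₁, W ψ₀⟫_ℂ)]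
        linarith
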